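/- (Repulsion between positive and negative parts.) Let f : ℝ → ℝ be measurable with [f]² < ∞, and set f₊ = max{f, 0} and f₋ = min{f, 0}. Then [f]² ≥ [f₊]² + [f₋]², and equality holds if and only if f does not change sign, i.e. f₊ = 0 almost everywhere or f₋ = 0 almost everywhere. -/

import Mathlib

open Real MeasureTheory Filter Topology
open scoped ENNReal NNReal

noncomputable section

/-- `k = min {h, 1}`. -/
def kparam (h : ℝ) : ℝ := min h 1

/-- `α = arccos k ∈ [0, π/2]`. -/
def alphaParam (h : ℝ) : ℝ := Real.arccos (kparam h)

/-- The anisotropy potential `W_h(θ) = (1/2)(cos²θ − 2h cos θ + 2hk − k²)`. -/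
def Wpot (h θ : ℝ) : ℝ :=
  (1/2) * ((Real.cos θ)^2 - 2*h*Real.cos θ + 2*h*(kparam h) - (kparam h)^2)

/-- The set `2πℤ + {−α, α}` of allowed limits at `±∞`. -/
def limSet (h : ℝ) : Set ℝ :=
  {y | ∃ n : ℤ, y = 2*Real.pi*n + alphaParam h ∨ y = 2*Real.pi*n - alphaParam h}

/-- The total energy `E_h(φ)`, valued in `[0, ∞]`:
exchange + anisotropy energy plus the stray-field (homogeneous `H^{1/2}`) energy. -/
def energy (h : ℝ) (φ : ℝ → ℝ) : ℝ≥0∞ :=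
  ENNReal.ofReal (1/2) *
      (∫⁻ x : ℝ, ENNReal.ofReal ((deriv φ x)^2 + 2 * Wpot h (φ x))) +
    ENNReal.ofReal (1/(4*Real.pi)) *
      (∫⁻ s : ℝ, ∫⁻ t : ℝ,
        ENNReal.ofReal ((Real.cos (φ s) - Real.cos (φ t))^2 / (s - t)^2))

/-- An admissible phase: `C¹`, limits at `±∞` in `2πℤ + {−α, α}`, finite energy. -/
def Admissible (h : ℝ) (φ : ℝ → ℝ) : Prop :=
  ContDiff ℝ 1 φ ∧
    (∃ L ∈ limSet h, Tendsto φ atTop (𝓝 L)) ∧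
    (∃ L ∈ limSet h, Tendsto φ atBot (𝓝 L)) ∧
    energy h φ < ⊤

/-- The winding number `deg(φ) = (φ(+∞) − φ(−∞))/(2π)`. -/
def deg (φ : ℝ → ℝ) : ℝ :=
  (limUnder atTop φ - limUnder atBot φ) / (2*Real.pi)

/-- `𝒜_h(d)`: admissible phases of winding number `d`. -/
def AA (h d : ℝ) : Set (ℝ → ℝ) := {φ | Admissible h φ ∧ deg φ = d}

/-- `ℰ_h(d) = inf {E_h(φ) : φ ∈ 𝒜_h(d)}`. -/
def Einf (h d : ℝ) : ℝ≥0∞ := ⨅ φ ∈ AA h d, energy h φ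

/-- `D_α = {n + j·α/π : n ∈ ℤ, j ∈ {−1, 0, 1}}`. -/
def Dset (h : ℝ) : Set ℝ :=
  {d | ∃ n j : ℤ, (j = -1 ∨ j = 0 ∨ j = 1) ∧ d = n + j * alphaParam h / Real.pi}

/-- The squared homogeneous `H^{1/2}(ℝ)` seminorm, valued in `[0,∞]`. -/
def semiH (f : ℝ → ℝ) : ℝ≥0∞ :=
  ENNReal.ofReal (1/(2*Real.pi)) *
    ∫⁻ s : ℝ, ∫⁻ t : ℝ, ENNReal.ofReal ((f s - f t)^2 / (s - t)^2)

lemma cross_nonneg (x y : ℝ) : 0 ≤ (max x 0 - max y 0) * (min x 0 - min y 0) := by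
  rcases le_total x 0 with hx | hx <;> rcases le_total y 0 with hy | hy <;>
    simp [max_eq_right, max_eq_left, min_eq_left, min_eq_right, hx, hy] <;> nlinarith

/-- **Repulsion between positive and negative parts.** -/
theorem repulsion (f : ℝ → ℝ) (hf : Measurable f) (hfin : semiH f < ⊤) :
    semiH (fun x => max (f x) 0) + semiH (fun x => min (f x) 0) ≤ semiH f ∧
      (semiH f = semiH (fun x => max (f x) 0) + semiH (fun x => min (f x) 0) ↔
        ((fun x => max (f x) 0) =ᵐ[volume] (0 : ℝ → ℝ) ∨
          (fun x => min (f x) 0) =ᵐ[volume] (0 : ℝ → ℝ))) := by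
  set g : ℝ → ℝ := fun x => max (f x) 0 with hgdef
  set m : ℝ → ℝ := fun x => min (f x) 0 with hmdef
  have hg : Measurable g := hf.max measurable_const
  have hm : Measurable m := hf.min measurable_const
  set pr : Measure (ℝ × ℝ) := (volume : Measure ℝ).prod volume with hprdef
  set A : ℝ × ℝ → ℝ≥0∞ := fun p => ENNReal.ofReal ((g p.1 - g p.2)^2/(p.1 - p.2)^2) with hAdef
  set B : ℝ × ℝ → ℝ≥0∞ := fun p => ENNReal.ofReal ((m p.1 - m p.2)^2/(p.1 - p.2)^2) with hBdef
  set C : ℝ × ℝ → ℝ≥0∞ :=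
    fun p => ENNReal.ofReal (2*(g p.1 - g p.2)*(m p.1 - m p.2)/(p.1 - p.2)^2) with hCdef
  set F : ℝ × ℝ → ℝ≥0∞ := fun p => ENNReal.ofReal ((f p.1 - f p.2)^2/(p.1 - p.2)^2) with hFdef
  have hdm : Measurable (fun p : ℝ × ℝ => (p.1 - p.2)^2) :=
    (measurable_fst.sub measurable_snd).pow_const 2
  have hga : Measurable (fun p : ℝ × ℝ => g p.1 - g p.2) :=
    (hg.comp measurable_fst).sub (hg.comp measurable_snd)
  have hmb : Measurable (fun p : ℝ × ℝ => m p.1 - m p.2) :=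
    (hm.comp measurable_fst).sub (hm.comp measurable_snd)
  have measA : Measurable A := ((hga.pow_const 2).div hdm).ennreal_ofReal
  have measB : Measurable B := ((hmb.pow_const 2).div hdm).ennreal_ofReal
  have measC : Measurable C := (((hga.const_mul 2).mul hmb).div hdm).ennreal_ofReal
  have measF : Measurable F :=
    ((((hf.comp measurable_fst).sub (hf.comp measurable_snd)).pow_const 2).div hdm).ennreal_ofReal
  set c : ℝ≥0∞ := ENNReal.ofReal (1/(2*Real.pi)) with hcdef
  -- semiH as product integrals
  have hsemi : ∀ u : ℝ → ℝ,
      Measurable (fun p : ℝ × ℝ => ENNReal.ofReal ((u p.1 - u p.2)^2/(p.1 - p.2)^2)) →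
      semiH u = c * ∫⁻ p : ℝ × ℝ, ENNReal.ofReal ((u p.1 - u p.2)^2/(p.1 - p.2)^2) ∂pr := by
    intro u hu
    rw [semiH]
    congr 1
    exact (lintegral_prod _ hu.aemeasurable).symm
  have hsA : semiH g = c * ∫⁻ p, A p ∂pr := hsemi g measA
  have hsB : semiH m = c * ∫⁻ p, B p ∂pr := hsemi m measB
  have hsF : semiH f = c * ∫⁻ p, F p ∂pr := hsemi f measF
  -- pointwise decomposition
  have hpt : ∀ p : ℝ × ℝ, F p = A p + B p + C p := by
    rintro ⟨s, t⟩
    simp only [hFdef, hAdef, hBdef, hCdef, hgdef, hmdef]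
    have hab : f s - f t = (max (f s) 0 - max (f t) 0) + (min (f s) 0 - min (f t) 0) := by
      have h1 := max_add_min (f s) 0
      have h2 := max_add_min (f t) 0
      linarith
    set a := max (f s) 0 - max (f t) 0 with ha
    set b := min (f s) 0 - min (f t) 0 with hb
    have hdnn : (0:ℝ) ≤ (s - t)^2 := sq_nonneg _
    have habnn : 0 ≤ a * b := cross_nonneg (f s) (f t)
    have h2 : (f s - f t)^2/(s-t)^2 = a^2/(s-t)^2 + b^2/(s-t)^2 + 2*a*b/(s-t)^2 := by
      rw [hab, show (a+b)^2 = a^2 + b^2 + 2*a*b by ring, add_div, add_div]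
    rw [h2, ENNReal.ofReal_add (by positivity) (div_nonneg (by nlinarith) hdnn),
      ENNReal.ofReal_add (by positivity) (by positivity)]
  have hJF : (∫⁻ p, F p ∂pr) = (∫⁻ p, A p ∂pr) + (∫⁻ p, B p ∂pr) + (∫⁻ p, C p ∂pr) := by
    rw [show (∫⁻ p, F p ∂pr) = ∫⁻ p, (A p + B p + C p) ∂pr from lintegral_congr hpt,
      lintegral_add_left (by exact measA.add measB : Measurable fun p => A p + B p),
      lintegral_add_left measA]
  have hmain : semiH f = semiH g + semiH m + c * ∫⁻ p, C p ∂pr := by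
    rw [hsF, hJF, hsA, hsB]; ring
  have hineq : semiH g + semiH m ≤ semiH f := by
    rw [hmain]; exact le_self_add
  have hne : semiH g + semiH m ≠ ⊤ := (lt_of_le_of_lt hineq hfin).ne
  have hcpos : (0:ℝ) < 1/(2*Real.pi) := by positivity
  have hc0 : c ≠ 0 := (ENNReal.ofReal_pos.mpr hcpos).ne'
  have hiffC : (semiH f = semiH g + semiH m) ↔ (∫⁻ p, C p ∂pr) = 0 := by
    rw [hmain]
    constructor
    · intro hEq
      have h0 : semiH g + semiH m + c * (∫⁻ p, C p ∂pr) = semiH g + semiH m + 0 := by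
        rw [add_zero]; exact hEq
      rcases mul_eq_zero.mp ((ENNReal.add_right_inj hne).mp h0) with h | h
      · exact absurd h hc0
      · exact h
    · intro h0; rw [h0, mul_zero, add_zero]
  -- characterize the a.e. vanishing
  have hgiff : (g =ᵐ[volume] (0 : ℝ → ℝ)) ↔ volume {x | 0 < f x} = 0 := by
    have hset : {x | ¬ g x = (0 : ℝ → ℝ) x} = {x | 0 < f x} := by
      ext x; simp [hgdef, max_eq_right_iff, not_le]
    rw [Filter.EventuallyEq, ae_iff, hset]
  have hmiff : (m =ᵐ[volume] (0 : ℝ → ℝ)) ↔ volume {x | f x < 0} = 0 := by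
    have hset : {x | ¬ m x = (0 : ℝ → ℝ) x} = {x | f x < 0} := by
      ext x; simp [hmdef, min_eq_right_iff, not_le]
    rw [Filter.EventuallyEq, ae_iff, hset]
  have hJC : (∫⁻ p, C p ∂pr) = 0 ↔
      (g =ᵐ[volume] (0 : ℝ → ℝ) ∨ m =ᵐ[volume] (0 : ℝ → ℝ)) := by
    rw [lintegral_eq_zero_iff measC]
    constructor
    · intro hae
      by_contra hcon
      push_neg at hcon
      obtain ⟨hgne, hmne⟩ := hcon
      have hP : volume {x | 0 < f x} ≠ 0 := fun h0 => hgne (hgiff.mpr h0)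
      have hN : volume {x | f x < 0} ≠ 0 := fun h0 => hmne (hmiff.mpr h0)
      have hsub : {x | 0 < f x} ×ˢ {x | f x < 0} ⊆ {p : ℝ × ℝ | ¬ C p = (0 : (ℝ × ℝ) → ℝ≥0∞) p} := by
        rintro ⟨s, t⟩ ⟨hs, ht⟩
        simp only [Set.mem_setOf_eq] at hs ht ⊢
        have hst : s - t ≠ 0 := by
          intro e
          have : s = t := by linarith [sub_eq_zero.mp e]
          rw [this] at hs; linarith
        have hpos : 0 < 2*(g s - g t)*(m s - m t)/(s-t)^2 := by
          simp only [hgdef, hmdef]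
          rw [max_eq_left hs.le, max_eq_right ht.le, min_eq_right hs.le, min_eq_left ht.le]
          have hd : (0:ℝ) < (s-t)^2 := by positivity
          apply div_pos _ hd
          nlinarith
        simp only [hCdef, Pi.zero_apply]
        exact (ENNReal.ofReal_pos.mpr hpos).ne'
      have hDnull : pr {p : ℝ × ℝ | ¬ C p = (0 : (ℝ × ℝ) → ℝ≥0∞) p} = 0 := by
        rw [Filter.EventuallyEq, ae_iff] at hae; exact hae
      have hle := measure_mono_null hsub hDnull
      rw [hprdef, Measure.prod_prod] at hle
      rcases mul_eq_zero.mp hle with h | h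
      · exact hP h
      · exact hN h
    · rintro (h0 | h0)
      · rw [Filter.EventuallyEq, ae_iff] at h0 ⊢
        simp only [Pi.zero_apply] at h0 ⊢
        have hbig : pr (({x | ¬ g x = 0} ×ˢ (Set.univ : Set ℝ)) ∪
            ((Set.univ : Set ℝ) ×ˢ {x | ¬ g x = 0})) = 0 := by
          apply measure_union_null <;> rw [hprdef, Measure.prod_prod] <;> simp [h0]
        refine measure_mono_null ?_ hbig
        rintro ⟨s, t⟩ hp
        simp only [Set.mem_setOf_eq] at hp
        simp only [Set.mem_union, Set.mem_prod, Set.mem_univ, and_true, true_and,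
          Set.mem_setOf_eq]
        by_contra hmem
        push_neg at hmem
        apply hp
        simp only [hCdef]
        rw [hmem.1, hmem.2]
        simp
      · rw [Filter.EventuallyEq, ae_iff] at h0 ⊢
        simp only [Pi.zero_apply] at h0 ⊢
        have hbig : pr (({x | ¬ m x = 0} ×ˢ (Set.univ : Set ℝ)) ∪
            ((Set.univ : Set ℝ) ×ˢ {x | ¬ m x = 0})) = 0 := by
          apply measure_union_null <;> rw [hprdef, Measure.prod_prod] <;> simp [h0]
        refine measure_mono_null ?_ hbig
        rintro ⟨s, t⟩ hp
        simp only [Set.mem_setOf_eq] at hp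
        simp only [Set.mem_union, Set.mem_prod, Set.mem_univ, and_true, true_and,
          Set.mem_setOf_eq]
        by_contra hmem
        push_neg at hmem
        apply hp
        simp only [hCdef]
        rw [hmem.1, hmem.2]
        simp
  exact ⟨hineq, hiffC.trans hJC⟩
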